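/- arXiv:1101.1002 — 3 statements merged into one kernel-verified Lean document; each statement's English description precedes it below -/
import Mathlib

section
/- Let P be a finite-rank orthogonal projection, V a bounded self-adjoint operator, and F_ε := (1−P) R_ε² (1−P) with R_ε as above. If the Fermi golden rule holds, i.e. lim_{ε→0⁺} ε P V (1−P) R_ε² (1−P) V P ≥ c₀ P for some c₀ > 0, then there exist ε₀ > 0 and constants c₁ ≥ c₂ > 0 such that (c₁/ε) P ≥ P V F_ε V P ≥ (c₂/ε) P for all 0 < ε < ε₀. -/
open scoped InnerProductSpace Topology
set_option maxHeartbeats 1000000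

/-- `R_ε := ((H₀ − k)² + ε²)^{-1/2}`, defined by the functional calculus. -/
noncomputable def Rop {𝓗 : Type*} [NormedAddCommGroup 𝓗] [InnerProductSpace ℂ 𝓗]
    [CompleteSpace 𝓗] (H₀ : 𝓗 →L[ℂ] 𝓗) (k ε : ℝ) : 𝓗 →L[ℂ] 𝓗 :=
  cfc (fun x : ℝ => ((x - k) ^ 2 + ε ^ 2) ^ (-(1 / 2) : ℝ)) H₀

/-- `F_ε := (1 − P) R_ε² (1 − P)`. -/
noncomputable def Fop {𝓗 : Type*} [NormedAddCommGroup 𝓗] [InnerProductSpace ℂ 𝓗]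
    [CompleteSpace 𝓗] (H₀ P : 𝓗 →L[ℂ] 𝓗) (k ε : ℝ) : 𝓗 →L[ℂ] 𝓗 :=
  (1 - P) * (Rop H₀ k ε * Rop H₀ k ε) * (1 - P)

/-- Under the Fermi golden rule `lim_{ε→0⁺} ε P V F_ε V P ≥ c₀ P`, one has two-sided
bounds `(c₁/ε) P ≥ P V F_ε V P ≥ (c₂/ε) P` for small `ε > 0`. -/
theorem fermi_golden_rule_bounds {𝓗 : Type*} [NormedAddCommGroup 𝓗]
    [InnerProductSpace ℂ 𝓗] [CompleteSpace 𝓗]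
    (H₀ V P : 𝓗 →L[ℂ] 𝓗) (hH₀ : IsSelfAdjoint H₀) (hV : IsSelfAdjoint V)
    (hPsa : IsSelfAdjoint P) (hPidem : P * P = P)
    (hPfin : FiniteDimensional ℂ (LinearMap.range (P : 𝓗 →ₗ[ℂ] 𝓗)))
    (k : ℝ) (heig : H₀ * P = (k : ℂ) • P)
    (c₀ : ℝ) (hc₀ : 0 < c₀) (G : 𝓗 →L[ℂ] 𝓗)
    (hlim : Filter.Tendsto (fun ε : ℝ => (ε : ℂ) • (P * V * Fop H₀ P k ε * V * P))
      (𝓝[>] (0 : ℝ)) (𝓝 G))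
    (hG : ∀ u : 𝓗, c₀ * ‖P u‖ ^ 2 ≤ (⟪u, G u⟫_ℂ).re) :
    ∃ ε₀ > (0 : ℝ), ∃ c₁ c₂ : ℝ, c₂ ≤ c₁ ∧ 0 < c₂ ∧
      ∀ ε : ℝ, 0 < ε → ε < ε₀ →
        (∀ u : 𝓗, (⟪u, (P * V * Fop H₀ P k ε * V * P) u⟫_ℂ).re ≤ (c₁ / ε) * ‖P u‖ ^ 2) ∧
        (∀ u : 𝓗, (c₂ / ε) * ‖P u‖ ^ 2 ≤ (⟪u, (P * V * Fop H₀ P k ε * V * P) u⟫_ℂ).re) := by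
  have hPP : ∀ w : 𝓗, P (P w) = P w := fun w => by
    rw [← ContinuousLinearMap.mul_apply, hPidem]
  have hsym : ∀ x y : 𝓗, ⟪P x, y⟫_ℂ = ⟪x, P y⟫_ℂ := hPsa.isSymmetric
  -- key reduction: the quadratic form at u equals the one at P u
  have hkey : ∀ (ε : ℝ) (u : 𝓗),
      ⟪u, (P * V * Fop H₀ P k ε * V * P) u⟫_ℂ
        = ⟪P u, (P * V * Fop H₀ P k ε * V * P) (P u)⟫_ℂ := by
    intro ε u
    simp only [ContinuousLinearMap.mul_apply, hPP]
    rw [← hsym u, ← hsym (P u), hPP]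
  -- eventually ‖ε • T ε − G‖ ≤ c₀/2
  have hev : {ε : ℝ | ‖(ε : ℂ) • (P * V * Fop H₀ P k ε * V * P) - G‖ ≤ c₀ / 2}
      ∈ 𝓝[>] (0 : ℝ) := by
    have h1 := hlim (Metric.closedBall_mem_nhds G (half_pos hc₀))
    refine Filter.mem_of_superset h1 ?_
    intro ε hε
    simpa [Metric.mem_closedBall, dist_eq_norm] using hε
  rw [Metric.mem_nhdsWithin_iff] at hev
  obtain ⟨ε₀, hε₀, hball⟩ := hev
  refine ⟨ε₀, hε₀, ‖G‖ + c₀ / 2, c₀ / 2, by linarith [norm_nonneg G], by positivity, ?_⟩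
  intro ε hε hεlt
  have hmem : ‖(ε : ℂ) • (P * V * Fop H₀ P k ε * V * P) - G‖ ≤ c₀ / 2 := by
    apply hball
    constructor
    · simpa [Metric.mem_ball, Real.dist_eq, abs_of_pos hε] using hεlt
    · exact hε
  set T := P * V * Fop H₀ P k ε * V * P with hT
  set D := (ε : ℂ) • T - G with hD
  have hbase : ∀ u : 𝓗,
      ε * (⟪u, T u⟫_ℂ).re = (⟪P u, G (P u)⟫_ℂ).re + (⟪P u, D (P u)⟫_ℂ).re := by
    intro u
    have h1 : ⟪P u, ((ε : ℂ) • T) (P u)⟫_ℂ = (ε : ℂ) * ⟪P u, T (P u)⟫_ℂ := by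
      rw [ContinuousLinearMap.smul_apply, inner_smul_right]
    have h2 : ((ε : ℂ) • T) (P u) = G (P u) + D (P u) := by
      simp [hD]
    have h3 : ⟪P u, G (P u) + D (P u)⟫_ℂ = ⟪P u, G (P u)⟫_ℂ + ⟪P u, D (P u)⟫_ℂ :=
      inner_add_right _ _ _
    have := h1.symm.trans ((congrArg _ h2).trans h3)
    have hre := congrArg Complex.re this
    rw [Complex.add_re] at hre
    rw [hkey ε u, ← hT, ← hre, Complex.mul_re]
    simp
  have hDbound : ∀ u : 𝓗, |(⟪P u, D (P u)⟫_ℂ).re| ≤ (c₀ / 2) * ‖P u‖ ^ 2 := by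
    intro u
    calc |(⟪P u, D (P u)⟫_ℂ).re| ≤ ‖⟪P u, D (P u)⟫_ℂ‖ := Complex.abs_re_le_norm _
      _ ≤ ‖P u‖ * ‖D (P u)‖ := norm_inner_le_norm _ _
      _ ≤ ‖P u‖ * (‖D‖ * ‖P u‖) := by
          gcongr; exact D.le_opNorm _
      _ ≤ ‖P u‖ * ((c₀ / 2) * ‖P u‖) := by
          gcongr
      _ = (c₀ / 2) * ‖P u‖ ^ 2 := by ring
  constructor
  · intro u
    have hGup : (⟪P u, G (P u)⟫_ℂ).re ≤ ‖G‖ * ‖P u‖ ^ 2 := by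
      calc (⟪P u, G (P u)⟫_ℂ).re ≤ ‖⟪P u, G (P u)⟫_ℂ‖ := Complex.re_le_norm _
        _ ≤ ‖P u‖ * ‖G (P u)‖ := norm_inner_le_norm _ _
        _ ≤ ‖P u‖ * (‖G‖ * ‖P u‖) := by gcongr; exact G.le_opNorm _
        _ = ‖G‖ * ‖P u‖ ^ 2 := by ring
    have h := hbase u
    have : ε * (⟪u, T u⟫_ℂ).re ≤ (‖G‖ + c₀ / 2) * ‖P u‖ ^ 2 := by
      rw [h]
      have := (abs_le.mp (hDbound u)).2
      nlinarith
    rw [div_mul_eq_mul_div, le_div_iff₀ hε]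
    linarith [this]
  · intro u
    have hGlo : c₀ * ‖P u‖ ^ 2 ≤ (⟪P u, G (P u)⟫_ℂ).re := by
      have := hG (P u)
      rwa [hPP u] at this
    have h := hbase u
    have : (c₀ / 2) * ‖P u‖ ^ 2 ≤ ε * (⟪u, T u⟫_ℂ).re := by
      rw [h]
      have := (abs_le.mp (hDbound u)).1
      nlinarith
    rw [div_mul_eq_mul_div, div_le_iff₀ hε]
    linarith [this]
end

section
/- Let H₀ be self-adjoint with eigenvalue k, eigenprojection P, V bounded self-adjoint, H_λ := H₀ + λV, F_ε := (1−P)R_ε²(1−P), B_ε := Im(F_ε V P). Then P [H_λ, iλB_ε] P = λ² P V F_ε V P. Consequently, under the Fermi golden rule bound P V F_ε V P ≥ (c₂/ε) P, one has P[H_λ, iλB_ε]P ≥ (c₂ λ²/ε) P. -/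
open scoped InnerProductSpace

/-- `B_ε := Im(F_ε V P)` with `Im T := (T − T*)/(2i)`. -/
noncomputable def Bop {𝓗 : Type*} [NormedAddCommGroup 𝓗] [InnerProductSpace ℂ 𝓗]
    [CompleteSpace 𝓗] (H₀ V P : 𝓗 →L[ℂ] 𝓗) (k ε : ℝ) : 𝓗 →L[ℂ] 𝓗 :=
  (2 * Complex.I)⁻¹ •
    (Fop H₀ P k ε * V * P - ContinuousLinearMap.adjoint (Fop H₀ P k ε * V * P))

lemma aux_main {𝓗 : Type*} [NormedAddCommGroup 𝓗] [InnerProductSpace ℂ 𝓗]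
    [CompleteSpace 𝓗] (F V P Hl : 𝓗 →L[ℂ] 𝓗)
    (hFsa : IsSelfAdjoint F) (hV : IsSelfAdjoint V) (hPsa : IsSelfAdjoint P)
    (hPidem : P * P = P) (hPF : P * F = 0) (hFP : F * P = 0) (k l : ℝ)
    (hPHl : P * Hl = (k : ℂ) • P + (l : ℂ) • (P * V))
    (hHlP : Hl * P = (k : ℂ) • P + (l : ℂ) • (V * P)) :
    P * (Complex.I • ((l : ℂ) • (Hl * ((2 * Complex.I)⁻¹ •
        (F * V * P - ContinuousLinearMap.adjoint (F * V * P))) -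
      ((2 * Complex.I)⁻¹ •
        (F * V * P - ContinuousLinearMap.adjoint (F * V * P))) * Hl))) * P =
    ((l ^ 2 : ℝ) : ℂ) • (P * V * F * V * P) := by
  have hadj : ContinuousLinearMap.adjoint (F * V * P) = P * V * F := by
    rw [← ContinuousLinearMap.star_eq_adjoint, star_mul, star_mul, hPsa.star_eq,
      hV.star_eq, hFsa.star_eq, mul_assoc]
  rw [hadj]
  set B : 𝓗 →L[ℂ] 𝓗 := (2 * Complex.I)⁻¹ • (F * V * P - P * V * F) with hB
  have hBP : B * P = (2 * Complex.I)⁻¹ • (F * V * P) := by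
    rw [hB, smul_mul_assoc, sub_mul, mul_assoc (F * V) P P, hPidem,
      mul_assoc (P * V) F P, hFP, mul_zero, sub_zero]
  have hPF' : ∀ X : 𝓗 →L[ℂ] 𝓗, P * (F * X) = 0 := fun X => by
    rw [← mul_assoc, hPF, zero_mul]
  have hPB : P * B = -((2 * Complex.I)⁻¹ • (P * V * F)) := by
    rw [hB, mul_smul_comm, mul_sub]
    simp only [← mul_assoc, hPF, hPidem, zero_mul, zero_sub, smul_neg]
  have key : P * (Complex.I • ((l : ℂ) • (Hl * B - B * Hl))) * P =
      (Complex.I * l) • ((P * Hl) * (B * P) - (P * B) * (Hl * P)) := by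
    simp only [mul_smul_comm, smul_mul_assoc, mul_sub, sub_mul, smul_smul, smul_sub]
    noncomm_ring
  rw [key, hBP, hPB, hPHl, hHlP]
  simp only [mul_smul_comm, smul_mul_assoc, mul_add, add_mul, smul_add, smul_smul,
    neg_mul, mul_neg, smul_neg, neg_neg, mul_assoc, hFP, hPF', mul_zero, smul_zero,
    zero_add, add_zero, neg_zero, sub_neg_eq_add, zero_mul, sub_zero, zero_sub]
  rw [← add_smul]
  congr 1
  have h2I : (2 * Complex.I) ≠ 0 := by simp [Complex.I_ne_zero]
  field_simp
  push_cast
  ring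

/-- `P [H_λ, iλB_ε] P = λ² P V F_ε V P`; consequently, under the Fermi golden rule bound
`P V F_ε V P ≥ (c₂/ε) P`, one has `P [H_λ, iλB_ε] P ≥ (c₂ λ²/ε) P`. -/
theorem commutator_gain_positivity {𝓗 : Type*} [NormedAddCommGroup 𝓗]
    [InnerProductSpace ℂ 𝓗] [CompleteSpace 𝓗]
    (H₀ V P : 𝓗 →L[ℂ] 𝓗) (hH₀ : IsSelfAdjoint H₀) (hV : IsSelfAdjoint V)
    (hPsa : IsSelfAdjoint P) (hPidem : P * P = P)
    (k ε l : ℝ) (hε : 0 < ε)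
    (heig : H₀ * P = (k : ℂ) • P) (heig' : P * H₀ = (k : ℂ) • P)
    (Hl : 𝓗 →L[ℂ] 𝓗) (hHl : Hl = H₀ + (l : ℂ) • V)
    (Com : 𝓗 →L[ℂ] 𝓗)
    (hCom : Com = Complex.I • ((l : ℂ) • (Hl * Bop H₀ V P k ε - Bop H₀ V P k ε * Hl))) :
    P * Com * P = ((l ^ 2 : ℝ) : ℂ) • (P * V * Fop H₀ P k ε * V * P) ∧
    ∀ c₂ : ℝ,
      (∀ u : 𝓗, (c₂ / ε) * ‖P u‖ ^ 2 ≤ (⟪u, (P * V * Fop H₀ P k ε * V * P) u⟫_ℂ).re) →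
      ∀ u : 𝓗, (c₂ * l ^ 2 / ε) * ‖P u‖ ^ 2 ≤ (⟪u, (P * Com * P) u⟫_ℂ).re := by

  have hRsa : IsSelfAdjoint (Rop H₀ k ε) := cfc_predicate _ _
  have h1P : IsSelfAdjoint (1 - P : 𝓗 →L[ℂ] 𝓗) := (IsSelfAdjoint.one _).sub hPsa
  have hFsa : IsSelfAdjoint (Fop H₀ P k ε) := by
    rw [Fop]
    simp only [IsSelfAdjoint, star_mul, h1P.star_eq, hRsa.star_eq]
    noncomm_ring
  have hP1 : P * (1 - P) = 0 := by rw [mul_sub, mul_one, hPidem, sub_self]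
  have h1Pm : (1 - P) * P = 0 := by rw [sub_mul, one_mul, hPidem, sub_self]
  have hPF : P * Fop H₀ P k ε = 0 := by
    rw [Fop, ← mul_assoc, ← mul_assoc, hP1, zero_mul, zero_mul]
  have hFP : Fop H₀ P k ε * P = 0 := by
    rw [Fop, mul_assoc, h1Pm, mul_zero]
  have hPHl : P * Hl = (k : ℂ) • P + (l : ℂ) • (P * V) := by
    rw [hHl, mul_add, heig', mul_smul_comm]
  have hHlP : Hl * P = (k : ℂ) • P + (l : ℂ) • (V * P) := by
    rw [hHl, add_mul, heig, smul_mul_assoc]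
  have main : P * Com * P = ((l ^ 2 : ℝ) : ℂ) • (P * V * Fop H₀ P k ε * V * P) := by
    rw [hCom, Bop]
    exact aux_main (Fop H₀ P k ε) V P Hl hFsa hV hPsa hPidem hPF hFP k l hPHl hHlP
  refine ⟨main, fun c₂ hc₂ u => ?_⟩
  have h := hc₂ u
  have := mul_le_mul_of_nonneg_left h (sq_nonneg l)
  calc c₂ * l ^ 2 / ε * ‖P u‖ ^ 2 = l ^ 2 * (c₂ / ε * ‖P u‖ ^ 2) := by ring
    _ ≤ l ^ 2 * (⟪u, (P * V * Fop H₀ P k ε * V * P) u⟫_ℂ).re := this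
    _ = (⟪u, (P * Com * P) u⟫_ℂ).re := by
        rw [main]
        simp only [ContinuousLinearMap.smul_apply, inner_smul_right,
          Complex.re_ofReal_mul]
end

section
/- Let Δ̄ be a self-adjoint operator with no eigenvalues in an open interval J₀ and K a compact operator. Then ‖E_J(Δ̄) K E_J(Δ̄)‖ → 0 as the interval J shrinks to a point k ∈ J₀, where E_J is the spectral measure. Consequently, if E_J₀(Δ̄)[Δ̄, iS]E_J₀(Δ̄) ≥ a E_J₀(Δ̄) + E_J₀(Δ̄) K E_J₀(Δ̄) with a > 0, then for every 0 < c < a there is a subinterval J ∋ k with E_J(Δ̄)[Δ̄, iS]E_J(Δ̄) ≥ c E_J(Δ̄). -/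
open scoped InnerProductSpace Topology

/-- An abstract (projection-valued) spectral measure for the self-adjoint operator `A`:
a family of commuting orthogonal projections `E J`, multiplicative on intersections,
totalizing to `1`, commuting with `A`, and localizing `A` on the range of `E J`. -/
structure SpectralMeasure {𝓗 : Type*} [NormedAddCommGroup 𝓗] [InnerProductSpace ℂ 𝓗]
    [CompleteSpace 𝓗] (A : 𝓗 →L[ℂ] 𝓗) where
  E : Set ℝ → 𝓗 →L[ℂ] 𝓗
  selfadj : ∀ J, IsSelfAdjoint (E J)
  inter : ∀ J J', E (J ∩ J') = E J * E J'
  total : E Set.univ = 1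
  comm : ∀ J, A * E J = E J * A
  loc : ∀ (J : Set ℝ) (u : 𝓗), E J u = u →
    ∀ μ : ℝ, Metric.infDist μ J * ‖u‖ ≤ ‖A u - (μ : ℂ) • u‖

namespace SpectralMeasure

variable {𝓗 : Type*} [NormedAddCommGroup 𝓗] [InnerProductSpace ℂ 𝓗] [CompleteSpace 𝓗]
  {Δ : 𝓗 →L[ℂ] 𝓗} (SM : SpectralMeasure Δ)

lemma symm_inner (J : Set ℝ) (x y : 𝓗) : ⟪SM.E J x, y⟫_ℂ = ⟪x, SM.E J y⟫_ℂ :=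
  (ContinuousLinearMap.isSelfAdjoint_iff_isSymmetric.mp (SM.selfadj J)) x y

lemma idem (J : Set ℝ) (x : 𝓗) : SM.E J (SM.E J x) = SM.E J x := by
  have h := SM.inter J J
  rw [Set.inter_self] at h
  have h2 := ContinuousLinearMap.ext_iff.mp h x
  simpa [ContinuousLinearMap.mul_apply] using h2.symm

lemma normsq (J : Set ℝ) (x : 𝓗) : ‖SM.E J x‖ ^ 2 = (⟪x, SM.E J x⟫_ℂ).re := by
  have h1 : RCLike.re ⟪SM.E J x, SM.E J x⟫_ℂ = ‖SM.E J x‖ ^ 2 :=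
    inner_self_eq_norm_sq (𝕜 := ℂ) _
  rw [← h1, SM.symm_inner J, SM.idem J]
  rfl

lemma norm_apply_le (J : Set ℝ) (x : 𝓗) : ‖SM.E J x‖ ≤ ‖x‖ := by
  have h := SM.normsq J x
  have h2 : (⟪x, SM.E J x⟫_ℂ).re ≤ ‖x‖ * ‖SM.E J x‖ := by
    calc (⟪x, SM.E J x⟫_ℂ).re ≤ |(⟪x, SM.E J x⟫_ℂ).re| := le_abs_self _
    _ ≤ ‖⟪x, SM.E J x⟫_ℂ‖ := by
        exact Complex.abs_re_le_norm _
    _ ≤ ‖x‖ * ‖SM.E J x‖ := norm_inner_le_norm _ _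
  rcases eq_or_lt_of_le (norm_nonneg (SM.E J x)) with h0 | h0
  · rw [← h0]; exact norm_nonneg x
  · have h3 : ‖SM.E J x‖ * ‖SM.E J x‖ ≤ ‖x‖ * ‖SM.E J x‖ := by nlinarith
    exact le_of_mul_le_mul_right h3 h0

lemma absorb {J J' : Set ℝ} (h : J ⊆ J') (x : 𝓗) : SM.E J' (SM.E J x) = SM.E J x := by
  have hE : SM.E J' * SM.E J = SM.E J := by
    rw [← SM.inter]; congr 1; exact Set.inter_eq_right.mpr h
  have h2 := ContinuousLinearMap.ext_iff.mp hE x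
  simpa [ContinuousLinearMap.mul_apply] using h2

lemma mono {J J' : Set ℝ} (h : J ⊆ J') (x : 𝓗) : ‖SM.E J x‖ ≤ ‖SM.E J' x‖ := by
  have hE : SM.E J * SM.E J' = SM.E J := by
    rw [← SM.inter]; congr 1; exact Set.inter_eq_left.mpr h
  have h2 := ContinuousLinearMap.ext_iff.mp hE x
  simp only [ContinuousLinearMap.mul_apply] at h2
  rw [← h2]
  exact SM.norm_apply_le _ _

/-- Strong vanishing: if `k` is not an eigenvalue of the self-adjoint `Δ`, then
`E_{(k-1/(m+1), k+1/(m+1))} w → 0` for every `w`. -/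
lemma strong_vanish (hΔ : IsSelfAdjoint Δ) (k : ℝ)
    (hnoeig : ∀ u : 𝓗, Δ u = (k : ℂ) • u → u = 0) (w : 𝓗) :
    Filter.Tendsto
      (fun m : ℕ => ‖SM.E (Set.Ioo (k - 1/(m+1)) (k + 1/(m+1))) w‖)
      Filter.atTop (𝓝 0) := by
  set J : ℕ → Set ℝ := fun m => Set.Ioo (k - 1/(m+1)) (k + 1/(m+1)) with hJ
  have hpos : ∀ m : ℕ, (0:ℝ) < 1/(m+1) := fun m => by positivity
  have hJsub : ∀ {m n : ℕ}, m ≤ n → J n ⊆ J m := by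
    intro m n hmn
    have hle : (1:ℝ)/(n+1) ≤ 1/(m+1) := by
      apply one_div_le_one_div_of_le (by positivity)
      have : (m:ℝ) ≤ n := Nat.cast_le.mpr hmn
      linarith
    exact Set.Ioo_subset_Ioo (by linarith) (by linarith)
  set f : ℕ → 𝓗 := fun m => SM.E (J m) w with hf
  set g : ℕ → ℝ := fun m => ‖f m‖ ^ 2 with hg
  have hganti : Antitone g := by
    intro m n hmn
    have := SM.mono (hJsub hmn) w
    simpa [hg] using pow_le_pow_left₀ (norm_nonneg _) this 2
  have habsorb : ∀ {m n : ℕ}, m ≤ n → SM.E (J m) (f n) = f n :=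
    fun {m n} hmn => SM.absorb (hJsub hmn) w
  have hre : ∀ {m n : ℕ}, m ≤ n → (⟪f m, f n⟫_ℂ).re = g n := by
    intro m n hmn
    rw [hf]
    show (⟪SM.E (J m) w, f n⟫_ℂ).re = g n
    rw [SM.symm_inner, habsorb hmn]
    exact (SM.normsq (J n) w).symm
  have hnormsub : ∀ {m n : ℕ}, m ≤ n → ‖f m - f n‖ ^ 2 = g m - g n := by
    intro m n hmn
    have h := norm_sub_sq (𝕜 := ℂ) (f m) (f n)
    have hre' : RCLike.re ⟪f m, f n⟫_ℂ = g n := hre hmn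
    rw [h, hre']
    simp only [hg]
    ring
  -- the squared norms converge, hence `f` is Cauchy
  have hbdd : BddBelow (Set.range g) := ⟨0, by rintro _ ⟨m, rfl⟩; positivity⟩
  set L := ⨅ m, g m with hL
  have hgL : Filter.Tendsto g Filter.atTop (𝓝 L) := tendsto_atTop_ciInf hganti hbdd
  have hLle : ∀ m, L ≤ g m := fun m => ciInf_le hbdd m
  have hcauchy : CauchySeq f := by
    apply cauchySeq_of_le_tendsto_0' (fun N => Real.sqrt (g N - L))
    · intro n m hnm
      rw [dist_eq_norm]
      have h1 : ‖f n - f m‖ = Real.sqrt (g n - g m) := by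
        rw [← hnormsub hnm]
        exact (Real.sqrt_sq (norm_nonneg _)).symm
      rw [h1]
      exact Real.sqrt_le_sqrt (by linarith [hLle m])
    · have h0 : Filter.Tendsto (fun N => g N - L) Filter.atTop (𝓝 0) := by
        simpa using hgL.sub_const L
      have := (Real.continuous_sqrt.tendsto 0).comp h0
      simpa [Function.comp_def] using this
  obtain ⟨v, hv⟩ := cauchySeq_tendsto_of_complete hcauchy
  -- the limit is fixed by all the projections
  have hEv : ∀ m : ℕ, SM.E (J m) v = v := by
    intro m
    have h1 : Filter.Tendsto (fun n => SM.E (J m) (f n)) Filter.atTop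
        (𝓝 (SM.E (J m) v)) := ((SM.E (J m)).continuous.tendsto v).comp hv
    have h2 : Filter.Tendsto (fun n => SM.E (J m) (f n)) Filter.atTop (𝓝 v) := by
      apply hv.congr'
      filter_upwards [Filter.eventually_ge_atTop m] with n hn
      exact (habsorb hn).symm
    exact tendsto_nhds_unique h1 h2
  -- key localization estimate on vectors fixed by all projections
  have key : ∀ x : 𝓗, (∀ m : ℕ, SM.E (J m) x = x) → ∀ μ : ℝ,
      |μ - k| * ‖x‖ ≤ ‖Δ x - (μ : ℂ) • x‖ := by
    intro x hx μ
    have hm : ∀ m : ℕ, (|μ - k| - 1/(m+1)) * ‖x‖ ≤ ‖Δ x - (μ:ℂ) • x‖ := by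
      intro m
      have hloc := SM.loc (J m) x (hx m) μ
      have hinf : |μ - k| - 1/(m+1) ≤ Metric.infDist μ (J m) := by
        by_contra hcon
        push_neg at hcon
        have hne : (J m).Nonempty :=
          ⟨k, by constructor <;> linarith [hpos m]⟩
        obtain ⟨y, hy, hyd⟩ := (Metric.infDist_lt_iff hne).mp hcon
        have hyk : |y - k| < 1/(m+1) := by
          obtain ⟨hy1, hy2⟩ := hy
          rw [abs_lt]; constructor <;> linarith
        have h3 : |μ - k| ≤ |μ - y| + |y - k| := by
          calc |μ - k| = |(μ - y) + (y - k)| := by ring_nf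
          _ ≤ |μ - y| + |y - k| := abs_add_le _ _
        rw [Real.dist_eq] at hyd
        linarith
      calc (|μ - k| - 1/(m+1)) * ‖x‖
          ≤ Metric.infDist μ (J m) * ‖x‖ :=
            mul_le_mul_of_nonneg_right hinf (norm_nonneg x)
        _ ≤ ‖Δ x - (μ:ℂ) • x‖ := hloc
    have hten : Filter.Tendsto (fun m : ℕ => (|μ - k| - 1/(m+1)) * ‖x‖)
        Filter.atTop (𝓝 (|μ - k| * ‖x‖)) := by
      have h0 : Filter.Tendsto (fun m : ℕ => 1/((m:ℝ)+1)) Filter.atTop (𝓝 0) :=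
        tendsto_one_div_add_atTop_nhds_zero_nat
      have := ((tendsto_const_nhds (x := |μ - k|) (f := Filter.atTop (α := ℕ))).sub h0).mul_const ‖x‖
      simpa using this
    exact le_of_tendsto hten (Filter.Eventually.of_forall hm)
  -- invariance of the fixed set
  have hB : ∀ x : 𝓗, (∀ m : ℕ, SM.E (J m) x = x) →
      ∀ m : ℕ, SM.E (J m) (Δ x - (k:ℂ) • x) = Δ x - (k:ℂ) • x := by
    intro x hx m
    have hc := ContinuousLinearMap.ext_iff.mp (SM.comm (J m)) x
    simp only [ContinuousLinearMap.mul_apply] at hc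
    rw [map_sub, map_smul, hx m, ← hc, hx m]
  -- vanishing of the quadratic form on fixed vectors
  have quad : ∀ x : 𝓗, (∀ m : ℕ, SM.E (J m) x = x) →
      (⟪Δ x - (k:ℂ) • x, x⟫_ℂ).re = 0 := by
    intro x hx
    have hb : ∀ lam : ℝ, 2 * lam * (⟪Δ x - (k:ℂ) • x, x⟫_ℂ).re
        ≤ ‖Δ x - (k:ℂ) • x‖ ^ 2 := by
      intro lam
      have h1 := key x hx (k + lam)
      have h2 : Δ x - (((k + lam : ℝ)):ℂ) • x
          = (Δ x - (k:ℂ) • x) - (lam:ℂ) • x := by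
        push_cast
        rw [add_smul]
        abel
      have h3 : |k + lam - k| = |lam| := by ring_nf
      rw [h2, h3] at h1
      have h4 : (|lam| * ‖x‖) ^ 2 ≤ ‖(Δ x - (k:ℂ) • x) - (lam:ℂ) • x‖ ^ 2 :=
        pow_le_pow_left₀ (by positivity) h1 2
      have h5 := norm_sub_sq (𝕜 := ℂ) (Δ x - (k:ℂ) • x) ((lam:ℂ) • x)
      have h6 : RCLike.re ⟪Δ x - (k:ℂ) • x, (lam:ℂ) • x⟫_ℂ
          = lam * (⟪Δ x - (k:ℂ) • x, x⟫_ℂ).re := by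
        rw [inner_smul_right]
        exact Complex.re_ofReal_mul _ _
      have h7 : ‖(lam:ℂ) • x‖ ^ 2 = lam ^ 2 * ‖x‖ ^ 2 := by
        rw [norm_smul, mul_pow, Complex.norm_real, Real.norm_eq_abs, sq_abs]
      rw [h5, h6, h7] at h4
      have h8 : (|lam| * ‖x‖) ^ 2 = lam ^ 2 * ‖x‖ ^ 2 := by
        rw [mul_pow, sq_abs]
      rw [h8] at h4
      linarith
    by_contra hr
    have hC : (0:ℝ) ≤ ‖Δ x - (k:ℂ) • x‖ ^ 2 := by positivity
    have h9 : 2 * ((‖Δ x - (k:ℂ) • x‖ ^ 2 + 1) / (2 * (⟪Δ x - (k:ℂ) • x, x⟫_ℂ).re))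
        * (⟪Δ x - (k:ℂ) • x, x⟫_ℂ).re = ‖Δ x - (k:ℂ) • x‖ ^ 2 + 1 := by
      have ht : 2 * (⟪Δ x - (k:ℂ) • x, x⟫_ℂ).re ≠ 0 :=
        mul_ne_zero two_ne_zero hr
      calc 2 * ((‖Δ x - (k:ℂ) • x‖ ^ 2 + 1) / (2 * (⟪Δ x - (k:ℂ) • x, x⟫_ℂ).re))
          * (⟪Δ x - (k:ℂ) • x, x⟫_ℂ).re
          = (‖Δ x - (k:ℂ) • x‖ ^ 2 + 1) / (2 * (⟪Δ x - (k:ℂ) • x, x⟫_ℂ).re)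
            * (2 * (⟪Δ x - (k:ℂ) • x, x⟫_ℂ).re) := by ring
        _ = ‖Δ x - (k:ℂ) • x‖ ^ 2 + 1 := div_mul_cancel₀ _ ht
    have hb'' := hb ((‖Δ x - (k:ℂ) • x‖ ^ 2 + 1) / (2 * (⟪Δ x - (k:ℂ) • x, x⟫_ℂ).re))
    rw [h9] at hb''
    linarith
  -- symmetry of `Δ - k`
  have hsym : ∀ x y : 𝓗, ⟪Δ x - (k:ℂ) • x, y⟫_ℂ = ⟪x, Δ y - (k:ℂ) • y⟫_ℂ := by
    intro x y
    have hsd := (ContinuousLinearMap.isSelfAdjoint_iff_isSymmetric.mp hΔ) x y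
    simp only [ContinuousLinearMap.coe_coe] at hsd
    rw [inner_sub_left, inner_sub_right, hsd,
      inner_smul_left, inner_smul_right, Complex.conj_ofReal]
  -- polarization: the limit is an eigenvector
  have hBv : Δ v - (k:ℂ) • v = 0 := by
    set u := Δ v - (k:ℂ) • v with hu
    have hPu : ∀ m : ℕ, SM.E (J m) u = u := hB v hEv
    have hPsum : ∀ m : ℕ, SM.E (J m) (v + u) = v + u := by
      intro m; rw [map_add, hEv m, hPu m]
    have q1 := quad v hEv
    have q2 := quad u hPu
    have q3 := quad (v + u) hPsum
    have hBsum : Δ (v + u) - (k:ℂ) • (v + u)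
        = (Δ v - (k:ℂ) • v) + (Δ u - (k:ℂ) • u) := by
      rw [map_add, smul_add]; abel
    rw [hBsum, inner_add_left, inner_add_right, inner_add_right] at q3
    simp only [Complex.add_re] at q3
    have e3 : (⟪Δ v - (k:ℂ) • v, u⟫_ℂ).re = ‖u‖ ^ 2 := by
      rw [← hu]
      have := inner_self_eq_norm_sq (𝕜 := ℂ) u
      exact this
    have e4 : (⟪Δ u - (k:ℂ) • u, v⟫_ℂ).re = ‖u‖ ^ 2 := by
      rw [hsym u v, ← hu]
      have := inner_self_eq_norm_sq (𝕜 := ℂ) u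
      exact this
    have hu0 : ‖u‖ ^ 2 = 0 := by
      rw [q1, e3, e4, q2] at q3 <;> try skip
      linarith
    have : ‖u‖ = 0 := by
      have := sq_eq_zero_iff.mp hu0
      exact this
    simpa [hu] using norm_eq_zero.mp this
  have hv0 : v = 0 := hnoeig v (by rwa [sub_eq_zero] at hBv)
  have := hv.norm
  rw [hv0, norm_zero] at this
  exact this

end SpectralMeasure

/-- If `Δ̄` has no eigenvalue in the open interval `(a, b) ∋ k` and `K` is compact, then
`‖E_J K E_J‖ → 0` as the interval `J` shrinks to `k`; consequently a Mourre estimate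
with compact error `E_{(a,b)} T E_{(a,b)} ≥ γ E_{(a,b)} + E_{(a,b)} K E_{(a,b)}` upgrades,
on a small enough subinterval `J ∋ k`, to a strict estimate `E_J T E_J ≥ c E_J` for any
`0 < c < γ`. -/
theorem shrink_interval_kills_compact_error {𝓗 : Type*} [NormedAddCommGroup 𝓗]
    [InnerProductSpace ℂ 𝓗] [CompleteSpace 𝓗]
    (Δ : 𝓗 →L[ℂ] 𝓗) (hΔ : IsSelfAdjoint Δ) (SM : SpectralMeasure Δ)
    (a b k : ℝ) (hk : k ∈ Set.Ioo a b)
    (hnoeig : ∀ μ ∈ Set.Ioo a b, ∀ u : 𝓗, Δ u = (μ : ℂ) • u → u = 0)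
    (K : 𝓗 →L[ℂ] 𝓗) (hK : IsCompactOperator (K : 𝓗 →ₗ[ℂ] 𝓗))
    (T : 𝓗 →L[ℂ] 𝓗) (hT : IsSelfAdjoint T) (γ : ℝ) (hγ : 0 < γ)
    (hMourre : ∀ u : 𝓗, SM.E (Set.Ioo a b) u = u →
      γ * ‖u‖ ^ 2 + (⟪u, K u⟫_ℂ).re ≤ (⟪u, T u⟫_ℂ).re) :
    (∀ δ : ℕ → ℝ, (∀ n, 0 < δ n) → Filter.Tendsto δ Filter.atTop (𝓝 0) →
      Filter.Tendsto
        (fun n => ‖SM.E (Set.Ioo (k - δ n) (k + δ n)) * K *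
          SM.E (Set.Ioo (k - δ n) (k + δ n))‖) Filter.atTop (𝓝 0)) ∧
    ∀ c : ℝ, 0 < c → c < γ → ∃ a' b' : ℝ, a ≤ a' ∧ b' ≤ b ∧ k ∈ Set.Ioo a' b' ∧
      ∀ u : 𝓗, SM.E (Set.Ioo a' b') u = u → c * ‖u‖ ^ 2 ≤ (⟪u, T u⟫_ℂ).re := by
  have hknoeig : ∀ u : 𝓗, Δ u = (k : ℂ) • u → u = 0 := hnoeig k hk
  -- strong vanishing along arbitrary shrinking sequences
  have strong' : ∀ (δ : ℕ → ℝ), (∀ n, 0 < δ n) →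
      Filter.Tendsto δ Filter.atTop (𝓝 0) → ∀ w : 𝓗,
      Filter.Tendsto (fun n => ‖SM.E (Set.Ioo (k - δ n) (k + δ n)) w‖)
        Filter.atTop (𝓝 0) := by
    intro δ hδpos hδ0 w
    have h := SM.strong_vanish hΔ k hknoeig w
    rw [Metric.tendsto_atTop] at h ⊢
    intro ε hε
    obtain ⟨M, hM⟩ := h ε hε
    have hMε : ‖SM.E (Set.Ioo (k - 1/(M+1)) (k + 1/(M+1))) w‖ < ε := by
      have := hM M le_rfl
      rwa [Real.dist_eq, sub_zero, abs_of_nonneg (norm_nonneg _)] at this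
    have hev : ∀ᶠ n in Filter.atTop, δ n < 1/((M:ℝ)+1) :=
      hδ0.eventually (gt_mem_nhds (by positivity))
    obtain ⟨N, hN⟩ := Filter.eventually_atTop.mp hev
    refine ⟨N, fun n hn => ?_⟩
    rw [Real.dist_eq, sub_zero, abs_of_nonneg (norm_nonneg _)]
    have hsub : Set.Ioo (k - δ n) (k + δ n)
        ⊆ Set.Ioo (k - 1/(M+1)) (k + 1/(M+1)) := by
      have := hN n hn
      exact Set.Ioo_subset_Ioo (by linarith) (by linarith)
    exact lt_of_le_of_lt (SM.mono hsub w) hMε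
  have part1 : ∀ δ : ℕ → ℝ, (∀ n, 0 < δ n) →
      Filter.Tendsto δ Filter.atTop (𝓝 0) →
      Filter.Tendsto
        (fun n => ‖SM.E (Set.Ioo (k - δ n) (k + δ n)) * K *
          SM.E (Set.Ioo (k - δ n) (k + δ n))‖) Filter.atTop (𝓝 0) := by
    intro δ hδpos hδ0
    rw [Metric.tendsto_atTop]
    intro ε hε
    obtain ⟨t, htfin, htsub⟩ := Metric.totallyBounded_iff.mp
      ((hK.isCompact_closure_image_closedBall 1).totallyBounded) (ε/4) (by positivity)
    have hcent : ∀ᶠ n in Filter.atTop, ∀ y ∈ t,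
        ‖SM.E (Set.Ioo (k - δ n) (k + δ n)) y‖ < ε/4 := by
      rw [Filter.eventually_all_finite htfin]
      intro y _
      exact (strong' δ hδpos hδ0 y).eventually (gt_mem_nhds (by positivity))
    obtain ⟨N, hN⟩ := Filter.eventually_atTop.mp hcent
    refine ⟨N, fun n hn => ?_⟩
    rw [Real.dist_eq, sub_zero, abs_of_nonneg (norm_nonneg _)]
    set P := SM.E (Set.Ioo (k - δ n) (k + δ n)) with hP
    have hbound : ‖P * K * P‖ ≤ ε/2 := by
      apply ContinuousLinearMap.opNorm_le_bound _ (by positivity)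
      intro x
      by_cases hx : x = 0
      · simp [hx]
      · have hxn : (0:ℝ) < ‖x‖ := norm_pos_iff.mpr hx
        set u : 𝓗 := ((‖x‖ : ℂ))⁻¹ • (P x) with hudef
        have hun : ‖u‖ ≤ 1 := by
          rw [hudef, norm_smul, norm_inv, Complex.norm_real, Real.norm_eq_abs,
            abs_of_pos hxn]
          rw [inv_mul_le_iff₀ hxn, mul_one]
          exact SM.norm_apply_le _ _
        have hmem : K u ∈ closure ((K : 𝓗 →ₗ[ℂ] 𝓗) '' Metric.closedBall 0 1) :=
          subset_closure ⟨u, mem_closedBall_zero_iff.mpr hun, rfl⟩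
        obtain ⟨y, hyt, hyb⟩ := Set.mem_iUnion₂.mp (htsub hmem)
        have hyd : ‖K u - y‖ < ε/4 := by
          rw [← dist_eq_norm]; exact Metric.mem_ball.mp hyb
        have hPKu : ‖P (K u)‖ ≤ ε/2 := by
          have h1 : P (K u) = P (K u - y) + P y := by rw [map_sub]; abel
          calc ‖P (K u)‖ = ‖P (K u - y) + P y‖ := by rw [h1]
          _ ≤ ‖P (K u - y)‖ + ‖P y‖ := norm_add_le _ _
          _ ≤ ‖K u - y‖ + ‖P y‖ := by gcongr; exact SM.norm_apply_le _ _
          _ ≤ ε/4 + ε/4 := add_le_add hyd.le (hN n hn y hyt).le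
          _ = ε/2 := by ring
        have hscale : P (K (P x)) = ((‖x‖ : ℂ)) • P (K u) := by
          rw [hudef, map_smul, map_smul, smul_smul,
            mul_inv_cancel₀ (by exact_mod_cast hxn.ne'), one_smul]
        calc ‖(P * K * P) x‖ = ‖P (K (P x))‖ := rfl
        _ = ‖((‖x‖ : ℂ)) • P (K u)‖ := by rw [hscale]
        _ = ‖x‖ * ‖P (K u)‖ := by
            rw [norm_smul, Complex.norm_real, Real.norm_eq_abs, abs_of_pos hxn]
        _ ≤ ‖x‖ * (ε/2) := by gcongr
        _ = ε/2 * ‖x‖ := by ring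
    linarith
  refine ⟨part1, ?_⟩
  intro c hc hcγ
  set d := min (k - a) (b - k) with hd
  have hdpos : 0 < d := lt_min (by linarith [hk.1]) (by linarith [hk.2])
  set δ : ℕ → ℝ := fun n => d / ((n:ℝ) + 2) with hδ
  have hδpos : ∀ n, 0 < δ n := fun n => by positivity
  have hδ0 : Filter.Tendsto δ Filter.atTop (𝓝 0) := by
    have h1 : Filter.Tendsto (fun n : ℕ => d / ((n:ℝ) + 1)) Filter.atTop (𝓝 0) := by
      have := (tendsto_one_div_add_atTop_nhds_zero_nat).const_mul d
      simpa [div_eq_mul_inv, mul_comm] using this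
    rw [Metric.tendsto_atTop] at h1 ⊢
    intro ε hε
    obtain ⟨N, hN⟩ := h1 ε hε
    refine ⟨N, fun n hn => ?_⟩
    have h2 := hN n hn
    rw [Real.dist_eq, sub_zero] at h2 ⊢
    have h3 : δ n ≤ d / ((n:ℝ) + 1) := by
      rw [hδ]
      apply div_le_div_of_nonneg_left hdpos.le (by positivity) (by linarith)
    rw [abs_of_pos (hδpos n)]
    rw [abs_of_pos (by positivity : (0:ℝ) < d / ((n:ℝ)+1))] at h2
    linarith
  have h1 := part1 δ hδpos hδ0
  obtain ⟨n, hn⟩ := (h1.eventually (gt_mem_nhds (show (0:ℝ) < γ - c by linarith))).exists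
  have hδd : δ n ≤ d := by
    rw [hδ]
    apply div_le_self hdpos.le (by linarith [Nat.cast_nonneg (α := ℝ) n])
  have hda : d ≤ k - a := min_le_left _ _
  have hdb : d ≤ b - k := min_le_right _ _
  refine ⟨k - δ n, k + δ n, by linarith, by linarith,
    ⟨by linarith [hδpos n], by linarith [hδpos n]⟩, ?_⟩
  intro u hu
  set J' := Set.Ioo (k - δ n) (k + δ n) with hJ'
  have hsub : J' ⊆ Set.Ioo a b :=
    Set.Ioo_subset_Ioo (by linarith) (by linarith)
  have hu2 : SM.E (Set.Ioo a b) u = u := by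
    rw [← hu]; exact SM.absorb hsub u
  have hM := hMourre u hu2
  have hKform : (⟪u, (SM.E J' * K * SM.E J') u⟫_ℂ) = ⟪u, K u⟫_ℂ := by
    have h1 : (SM.E J' * K * SM.E J') u = SM.E J' (K (SM.E J' u)) := rfl
    rw [h1, ← SM.symm_inner, hu]
  have habs : |(⟪u, K u⟫_ℂ).re| ≤ (γ - c) * ‖u‖ ^ 2 := by
    rw [← hKform]
    calc |(⟪u, (SM.E J' * K * SM.E J') u⟫_ℂ).re|
        ≤ ‖⟪u, (SM.E J' * K * SM.E J') u⟫_ℂ‖ := by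
          exact Complex.abs_re_le_norm _
      _ ≤ ‖u‖ * ‖(SM.E J' * K * SM.E J') u‖ := norm_inner_le_norm _ _
      _ ≤ ‖u‖ * (‖SM.E J' * K * SM.E J'‖ * ‖u‖) := by
          gcongr; exact ContinuousLinearMap.le_opNorm _ _
      _ ≤ ‖u‖ * ((γ - c) * ‖u‖) := by
          gcongr
      _ = (γ - c) * ‖u‖ ^ 2 := by ring
  have h2 : -((γ - c) * ‖u‖ ^ 2) ≤ (⟪u, K u⟫_ℂ).re := neg_abs_le _ |>.trans' (by linarith [abs_le.mp habs |>.1])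
  linarith
end
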